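/- Let n ≥ 4 and 2 ≤ k ≤ n−2. Let T_t(s) = √(1−s²(1−t²)) and let μ be the probability measure on [0,1] with density e(1−s²)^((n−k−3)/2) s^{k−1} ds. Suppose g̃ : [0,1] → ℝ is continuous with g̃ ≥ −1 everywhere and g̃(s) = γ* := (1+γ)/(1−γ) for s outside an interval J ⊂ (0,1), where γ ∈ (0,1) satisfies μ(T_t^{−1}(J)) ≤ γ for all t ∈ [0,1]. Then ∫₀¹ g̃(T_t(s)) dμ(s) ≥ γ*(1−γ) − γ = 1 for every t ∈ [0,1]. -/

import Mathlib

open MeasureTheory Set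

/-- the key lower-bound estimate: if `g̃ ≥ -1` everywhere on `[0,1]`,
`g̃ = γ* = (1+γ)/(1-γ)` off the 'bad' interval `J ⊂ (0,1)`, and the `μ`-measure of the
pullback `T_t⁻¹(J)` is at most `γ` for every `t ∈ [0,1]`, where `T_t(s) = √(1-s²(1-t²))`
and `μ` is the probability measure with density `e(1-s²)^((n-k-3)/2) s^(k-1)` on `[0,1]`,
then `∫₀¹ g̃(T_t(s)) dμ(s) ≥ γ*(1-γ) - γ = 1` for every `t ∈ [0,1]`. -/
theorem stmt14 (n k : ℕ) (hn : 4 ≤ n) (hk2 : 2 ≤ k) (hk : k ≤ n - 2)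
    (e : ℝ) (hepos : 0 < e)
    (he : e * ∫ s in (0:ℝ)..1,
        (1 - s ^ 2) ^ (((n : ℝ) - (k : ℝ) - 3) / 2) * s ^ ((k : ℝ) - 1) = 1)
    (a b : ℝ) (hJ : Icc a b ⊆ Ioo (0:ℝ) 1)
    (γ : ℝ) (hγ : γ ∈ Ioo (0:ℝ) 1)
    (g : ℝ → ℝ) (hgcont : ContinuousOn g (Icc 0 1))
    (hgeneg : ∀ s ∈ Icc (0:ℝ) 1, -1 ≤ g s)
    (hgout : ∀ s ∈ Icc (0:ℝ) 1, s ∉ Icc a b → g s = (1 + γ) / (1 - γ))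
    (hpull : ∀ t ∈ Icc (0:ℝ) 1,
      (∫ s in (0:ℝ)..1,
          (Icc a b).indicator (fun _ => (1:ℝ)) (Real.sqrt (1 - s ^ 2 * (1 - t ^ 2))) *
            (e * ((1 - s ^ 2) ^ (((n : ℝ) - (k : ℝ) - 3) / 2) * s ^ ((k : ℝ) - 1))))
        ≤ γ) :
    ∀ t ∈ Icc (0:ℝ) 1,
      ((1 + γ) / (1 - γ)) * (1 - γ) - γ = 1 ∧
      1 ≤ ∫ s in (0:ℝ)..1,
        g (Real.sqrt (1 - s ^ 2 * (1 - t ^ 2))) *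
          (e * ((1 - s ^ 2) ^ (((n : ℝ) - (k : ℝ) - 3) / 2) * s ^ ((k : ℝ) - 1))) := by
  intro t ht
  obtain ⟨hγ0, hγ1⟩ := hγ
  have h1γ : (0:ℝ) < 1 - γ := by linarith
  set γs : ℝ := (1 + γ) / (1 - γ) with hγs
  have hγsnn : 0 ≤ γs := div_nonneg (by linarith) (by linarith)
  refine ⟨by rw [hγs, div_mul_cancel₀ _ h1γ.ne']; ring, ?_⟩
  set r : ℝ := ((n : ℝ) - (k : ℝ) - 3) / 2 with hrdef
  have hkn : k + 2 ≤ n := by omega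
  have hknR : (k:ℝ) + 2 ≤ (n:ℝ) := by exact_mod_cast hkn
  have hrneg1 : (-1:ℝ) < r := by rw [hrdef]; linarith
  have hk1 : (1:ℝ) ≤ (k:ℝ) - 1 := by
    have : (2:ℝ) ≤ (k:ℝ) := by exact_mod_cast hk2
    linarith
  set w : ℝ → ℝ := fun s => e * ((1 - s ^ 2) ^ r * s ^ ((k:ℝ) - 1)) with hwdef
  -- w nonneg on [0,1]
  have hwnn : ∀ s ∈ Icc (0:ℝ) 1, 0 ≤ w s := by
    intro s hs
    exact mul_nonneg hepos.le (mul_nonneg (Real.rpow_nonneg (by nlinarith [hs.1, hs.2]) r)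
      (Real.rpow_nonneg hs.1 _))
  have hwmeas : Measurable w := by
    apply Measurable.const_mul
    exact ((measurable_const.sub (measurable_id.pow_const 2)).pow measurable_const).mul
      (measurable_id.pow measurable_const)
  -- interval integrability of w
  have hwint : IntervalIntegrable w volume 0 1 := by
    have hu : IntervalIntegrable (fun s : ℝ => (e * (2 ^ r + 1)) * (1 - s) ^ r) volume 0 1 := by
      have h1 : IntervalIntegrable (fun x : ℝ => x ^ r) volume 1 0 :=
        intervalIntegral.intervalIntegrable_rpow' hrneg1
      have h2 := h1.comp_sub_left 1
      have h3 := h2.const_mul (e * (2 ^ r + 1))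
      norm_num at h3
      exact h3
    apply hu.mono_fun' hwmeas.aestronglyMeasurable
    filter_upwards [ae_restrict_mem measurableSet_uIoc] with s hs
    rw [Set.uIoc_of_le (by norm_num : (0:ℝ) ≤ 1)] at hs
    have hs0 : 0 < s := hs.1
    have hs1 : s ≤ 1 := hs.2
    have hwnns : 0 ≤ w s := hwnn s ⟨hs0.le, hs1⟩
    rw [Real.norm_of_nonneg hwnns]
    have hfac : (1 - s ^ 2 : ℝ) = (1 - s) * (1 + s) := by ring
    have h1s : (0:ℝ) ≤ 1 - s := by linarith
    have h1s' : (0:ℝ) ≤ 1 + s := by linarith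
    have hsk : s ^ ((k:ℝ) - 1) ≤ 1 :=
      Real.rpow_le_one hs0.le hs1 (by linarith)
    have hbound : (1 + s) ^ r ≤ 2 ^ r + 1 := by
      rcases le_or_gt 0 r with hr0 | hr0
      · have : (1 + s) ^ r ≤ (2:ℝ) ^ r :=
          Real.rpow_le_rpow h1s' (by linarith) hr0
        have : (0:ℝ) < (1:ℝ) := one_pos
        linarith [Real.rpow_le_rpow h1s' (by linarith : (1+s:ℝ) ≤ 2) hr0]
      · have h1 : (1 + s) ^ r ≤ 1 :=
          Real.rpow_le_one_of_one_le_of_nonpos (by linarith) hr0.le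
        have h2 : (0:ℝ) < (2:ℝ) ^ r := Real.rpow_pos_of_pos (by norm_num) r
        linarith
    calc w s = e * ((1 - s) ^ r * (1 + s) ^ r * s ^ ((k:ℝ) - 1)) := by
          simp only [hwdef]; rw [hfac, Real.mul_rpow h1s h1s']
      _ ≤ e * ((1 - s) ^ r * (2 ^ r + 1) * 1) := by
          apply mul_le_mul_of_nonneg_left _ hepos.le
          have h1r : 0 ≤ (1 - s) ^ r := Real.rpow_nonneg h1s r
          have hsknn : 0 ≤ s ^ ((k:ℝ) - 1) := Real.rpow_nonneg hs0.le _
          have hA : (1 - s) ^ r * (1 + s) ^ r ≤ (1 - s) ^ r * (2 ^ r + 1) :=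
            mul_le_mul_of_nonneg_left hbound h1r
          calc (1 - s) ^ r * (1 + s) ^ r * s ^ ((k:ℝ) - 1)
              ≤ (1 - s) ^ r * (1 + s) ^ r * 1 := by
                apply mul_le_mul_of_nonneg_left hsk
                exact mul_nonneg h1r (Real.rpow_nonneg h1s' r)
            _ ≤ (1 - s) ^ r * (2 ^ r + 1) * 1 := by
                rw [mul_one, mul_one]; exact hA
      _ = e * (2 ^ r + 1) * (1 - s) ^ r := by ring
  -- ∫ w = 1
  have hwone : (∫ s in (0:ℝ)..1, w s) = 1 := by
    rw [hwdef]
    rw [intervalIntegral.integral_const_mul]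
    exact he
  -- T
  set T : ℝ → ℝ := fun s => Real.sqrt (1 - s ^ 2 * (1 - t ^ 2)) with hTdef
  have hTcont : Continuous T :=
    Real.continuous_sqrt.comp (continuous_const.sub ((continuous_pow 2).mul continuous_const))
  have hTmem : ∀ s ∈ Icc (0:ℝ) 1, T s ∈ Icc (0:ℝ) 1 := by
    intro s hs
    have ht0 := ht.1; have ht1 := ht.2
    constructor
    · exact Real.sqrt_nonneg _
    · have htt : t ^ 2 ≤ 1 := by nlinarith
      have hst : 0 ≤ s ^ 2 * (1 - t ^ 2) := mul_nonneg (sq_nonneg s) (by linarith)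
      calc T s ≤ Real.sqrt 1 := Real.sqrt_le_sqrt (by linarith)
        _ = 1 := Real.sqrt_one
  -- indicator function
  set ind : ℝ → ℝ := fun s => (Icc a b).indicator (fun _ => (1:ℝ)) (T s) with hind
  have hind01 : ∀ s, ind s = 0 ∨ ind s = 1 := by
    intro s
    by_cases h : T s ∈ Icc a b
    · right; simp [hind, indicator_of_mem h]
    · left; simp [hind, indicator_of_notMem h]
  have hindmeas : Measurable ind :=
    (measurable_const.indicator measurableSet_Icc).comp hTcont.measurable
  -- integrability of ind * w
  have hindint : IntervalIntegrable (fun s => ind s * w s) volume 0 1 := by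
    apply hwint.mono_fun' ((hindmeas.mul hwmeas).aestronglyMeasurable)
    filter_upwards [ae_restrict_mem measurableSet_uIoc] with s hs
    rw [Set.uIoc_of_le (by norm_num : (0:ℝ) ≤ 1)] at hs
    have hwnns : 0 ≤ w s := hwnn s ⟨hs.1.le, hs.2⟩
    rcases hind01 s with h | h <;> rw [Pi.mul_apply, h] <;>
      simp [abs_of_nonneg hwnns, hwnns]
  -- integrability of g∘T * w
  obtain ⟨C, hC⟩ := (isCompact_Icc).exists_bound_of_continuousOn hgcont
  have hC0 : 0 ≤ C := le_trans (norm_nonneg _) (hC 0 (by norm_num))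
  have hgTmeas : AEStronglyMeasurable (fun s => g (T s) * w s)
      ((volume : Measure ℝ).restrict (Set.uIoc (0:ℝ) 1)) := by
    rw [Set.uIoc_of_le (by norm_num : (0:ℝ) ≤ 1)]
    have h1 : ContinuousOn (fun s => g (T s)) (Icc (0:ℝ) 1) :=
      hgcont.comp hTcont.continuousOn hTmem
    have h2 : AEStronglyMeasurable (fun s => g (T s))
        ((volume : Measure ℝ).restrict (Icc (0:ℝ) 1)) :=
      h1.aestronglyMeasurable measurableSet_Icc
    exact (h2.mono_measure (Measure.restrict_mono Ioc_subset_Icc_self le_rfl)).mul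
      hwmeas.aestronglyMeasurable
  have hgTint : IntervalIntegrable (fun s => g (T s) * w s) volume 0 1 := by
    apply (hwint.const_mul C).mono_fun' hgTmeas
    filter_upwards [ae_restrict_mem measurableSet_uIoc] with s hs
    rw [Set.uIoc_of_le (by norm_num : (0:ℝ) ≤ 1)] at hs
    have hsI : s ∈ Icc (0:ℝ) 1 := ⟨hs.1.le, hs.2⟩
    have hwnns : 0 ≤ w s := hwnn s hsI
    have : ‖g (T s) * w s‖ = ‖g (T s)‖ * w s := by
      rw [norm_mul, Real.norm_of_nonneg hwnns]
    rw [this]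
    exact mul_le_mul_of_nonneg_right (hC _ (hTmem s hsI)) hwnns
  -- lower bound function
  have hlow : IntervalIntegrable (fun s => γs * w s - (γs + 1) * (ind s * w s)) volume 0 1 :=
    (hwint.const_mul γs).sub (hindint.const_mul (γs + 1))
  have hpt : ∀ s ∈ Icc (0:ℝ) 1,
      γs * w s - (γs + 1) * (ind s * w s) ≤ g (T s) * w s := by
    intro s hs
    have hwnns : 0 ≤ w s := hwnn s hs
    have hTs := hTmem s hs
    by_cases h : T s ∈ Icc a b
    · have hind1 : ind s = 1 := by simp [hind, indicator_of_mem h]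
      rw [hind1]
      have : (-1:ℝ) ≤ g (T s) := hgeneg _ hTs
      nlinarith
    · have hind0 : ind s = 0 := by simp [hind, indicator_of_notMem h]
      rw [hind0, hgout _ hTs h]
      simp
  have hmono := intervalIntegral.integral_mono_on (by norm_num : (0:ℝ) ≤ 1) hlow hgTint hpt
  have hA : (∫ s in (0:ℝ)..1, γs * w s) = γs * ∫ s in (0:ℝ)..1, w s :=
    intervalIntegral.integral_const_mul γs w
  have hB : (∫ s in (0:ℝ)..1, (γs + 1) * (ind s * w s))
      = (γs + 1) * ∫ s in (0:ℝ)..1, ind s * w s :=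
    intervalIntegral.integral_const_mul (γs + 1) _
  have hsplit : (∫ s in (0:ℝ)..1, (γs * w s - (γs + 1) * (ind s * w s)))
      = γs * (∫ s in (0:ℝ)..1, w s) - (γs + 1) * (∫ s in (0:ℝ)..1, ind s * w s) := by
    rw [intervalIntegral.integral_sub (hwint.const_mul γs) (hindint.const_mul (γs + 1)), hA, hB]
  have hpullt : (∫ s in (0:ℝ)..1, ind s * w s) ≤ γ := hpull t ht
  have hfinal : γs - (γs + 1) * γ = 1 := by
    rw [hγs]; field_simp; ring
  rw [hsplit, hwone] at hmono
  have h2 : (γs + 1) * (∫ s in (0:ℝ)..1, ind s * w s) ≤ (γs + 1) * γ :=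
    mul_le_mul_of_nonneg_left hpullt (by linarith)
  linarith
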